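/- Let D be a division ring, k a field contained in the center of D (so that D is a k-algebra), and τ a k-linear ring anti-automorphism of D with τ ∘ τ = id. Let n and m be natural numbers, let K = k(t₁,…,tₙ) be the field of fractions of the polynomial ring in n variables over k, and let τ̃ denote the ring anti-automorphism τ ⊗ id_K of D ⊗_k K. Fix units α₁,…,α_m ∈ kˣ and integer vectors a₁,…,a_m ∈ ℤⁿ, aᵢ = (a_{i,1},…,a_{i,n}), whose images in (ℤ/2ℤ)ⁿ are pairwise distinct. Then the hermitian form h(x,y) = Σ_{i=1}^m αᵢ t₁^{a_{i,1}}⋯tₙ^{a_{i,n}} τ̃(xᵢ) yᵢ is anisotropic on (D ⊗_k K)^m: for every x = (x₁,…,x_m) ∈ (D ⊗_k K)^m, if Σ_{i=1}^m αᵢ t₁^{a_{i,1}}⋯tₙ^{a_{i,n}} τ̃(xᵢ) xᵢ = 0 in D ⊗_k K, then x₁ = ⋯ = x_m = 0. -/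

import Mathlib

open TensorProduct

/-! ### Auxiliary lemmas on `AddMonoidAlgebra` over a linearly ordered group -/

section MulLemmas
variable {D : Type} [Ring D] {G : Type} [AddCommGroup G] [LinearOrder G] [DecidableEq G]
  [CovariantClass G G (· + ·) (· < ·)] [CovariantClass G G (Function.swap (· + ·)) (· < ·)]

lemma myAddLeftMono : AddLeftMono G := covariantClass_le_of_lt G G (· + ·)
lemma myAddRightMono : AddRightMono G := covariantClass_le_of_lt G G (Function.swap (· + ·))

lemma supp_mul_le (f g : AddMonoidAlgebra D G) {u v : G}
    (hf : ∀ w ∈ f.coeff.support, w ≤ u) (hg : ∀ w ∈ g.coeff.support, w ≤ v) :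
    ∀ w ∈ (f * g).coeff.support, w ≤ u + v := by
  haveI := myAddLeftMono (G := G); haveI := myAddRightMono (G := G)
  intro w hw
  obtain ⟨a, ha, b, hb, rfl⟩ := Finset.mem_add.mp (AddMonoidAlgebra.support_coeff_mul_subset f g hw)
  calc a + b ≤ u + b := add_le_add_left (hf a ha) b
    _ ≤ u + v := add_le_add_right (hg b hb) u

lemma mul_apply_lead (f g : AddMonoidAlgebra D G) {u v : G}
    (hf : ∀ w ∈ f.coeff.support, w ≤ u) (hg : ∀ w ∈ g.coeff.support, w ≤ v) :
    (f * g).coeff (u + v) = f.coeff u * g.coeff v := by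
  haveI := myAddLeftMono (G := G); haveI := myAddRightMono (G := G)
  rw [AddMonoidAlgebra.coeff_mul, Finsupp.sum]
  rw [Finset.sum_eq_single u]
  · rw [Finsupp.sum, Finset.sum_eq_single v]
    · rw [if_pos rfl]
    · intro b hb hbv
      beta_reduce
      rw [if_neg fun h => hbv (by exact add_left_cancel h)]
    · intro h
      rw [Finsupp.notMem_support_iff.mp h, mul_zero, if_pos rfl]
  · intro a ha hne
    apply Finset.sum_eq_zero
    intro b hb
    beta_reduce
    rw [if_neg]
    intro h
    have h1 : a < u := lt_of_le_of_ne (hf a ha) hne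
    have h2 : a + b < u + v :=
      lt_of_lt_of_le (add_lt_add_left h1 b) (add_le_add_right (hg b hb) u)
    exact absurd h (ne_of_lt h2)
  · intro h
    rw [Finsupp.notMem_support_iff.mp h]
    simp [Finsupp.sum]
end MulLemmas

/-! ### The map `Θ : AddMonoidAlgebra D (Lex (Fin n →₀ ℤ)) → D ⊗[k] k(t₁,…,tₙ)` -/

section Theta
variable (k : Type) [Field k] (D : Type) [DivisionRing D] [Algebra k D] (n : ℕ)

local notation "R" => MvPolynomial (Fin n) k
local notation "K" => FractionRing (MvPolynomial (Fin n) k)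

noncomputable def tpow (μ : Lex (Fin n →₀ ℤ)) : FractionRing (MvPolynomial (Fin n) k) :=
  ∏ j, (algebraMap R K (MvPolynomial.X j)) ^ ((ofLex μ) j)

lemma aX_ne_zero (j : Fin n) : algebraMap R K (MvPolynomial.X j) ≠ 0 := by
  simp only [ne_eq, map_eq_zero_iff _ (IsFractionRing.injective R K)]
  exact MvPolynomial.X_ne_zero j

lemma tpow_add (μ ν : Lex (Fin n →₀ ℤ)) : tpow k n (μ + ν) = tpow k n μ * tpow k n ν := by
  rw [tpow, tpow, tpow, ← Finset.prod_mul_distrib]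
  refine Finset.prod_congr rfl fun j _ => ?_
  rw [← zpow_add₀ (aX_ne_zero k n j)]
  rfl

lemma tpow_ne_zero (μ : Lex (Fin n →₀ ℤ)) : tpow k n μ ≠ 0 :=
  Finset.prod_ne_zero_iff.2 fun j _ => zpow_ne_zero _ (aX_ne_zero k n j)

lemma aSmul (c : k) (p : MvPolynomial (Fin n) k) :
    algebraMap R K (c • p) = c • algebraMap R K p :=
  map_smul (IsScalarTower.toAlgHom k R K) c p

lemma tpow_linearIndependent : LinearIndependent k (tpow k n) := by
  rw [linearIndependent_iff']
  intro s g hsum μ₀ hμ₀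
  classical
  set N : Fin n → ℕ := fun j => s.sup fun μ => (-(ofLex μ) j).toNat with hN
  have hge : ∀ μ ∈ s, ∀ j, 0 ≤ (ofLex μ) j + (N j : ℤ) := by
    intro μ hμ j
    have : (-(ofLex μ) j).toNat ≤ N j :=
      Finset.le_sup (f := fun μ : Lex (Fin n →₀ ℤ) => (-(ofLex μ) j).toNat) hμ
    omega
  set ν : Lex (Fin n →₀ ℤ) → (Fin n →₀ ℕ) := fun μ =>
    Finsupp.equivFunOnFinite.symm (fun j => ((ofLex μ) j + (N j : ℤ)).toNat) with hν
  have hνinj : ∀ μ ∈ s, ∀ μ' ∈ s, ν μ = ν μ' → μ = μ' := by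
    intro μ hμ μ' hμ' h
    have h2 : ∀ j, (ν μ) j = (ν μ') j := fun j => DFunLike.congr_fun h j
    simp only [hν, Finsupp.coe_equivFunOnFinite_symm] at h2
    have : (ofLex μ : Fin n →₀ ℤ) = ofLex μ' := by
      ext j
      have := h2 j
      have g1 := hge μ hμ j
      have g2 := hge μ' hμ' j
      omega
    exact congrArg toLex this
  set tN : FractionRing (MvPolynomial (Fin n) k) :=
    ∏ j, (algebraMap R K (MvPolynomial.X j)) ^ (N j) with htN
  have key : ∀ μ ∈ s, tpow k n μ * tN =
      algebraMap R K (MvPolynomial.monomial (ν μ) 1) := by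
    intro μ hμ
    rw [tpow, htN, ← Finset.prod_mul_distrib]
    have : ∀ j ∈ Finset.univ, (algebraMap R K (MvPolynomial.X j)) ^ ((ofLex μ) j)
        * (algebraMap R K (MvPolynomial.X j)) ^ (N j)
        = (algebraMap R K (MvPolynomial.X j ^ ((ν μ) j))) := by
      intro j _
      rw [map_pow, ← zpow_natCast (algebraMap R K (MvPolynomial.X j)) (N j),
        ← zpow_add₀ (aX_ne_zero k n j),
        ← zpow_natCast (algebraMap R K (MvPolynomial.X j)) ((ν μ) j)]
      congr 1
      have := hge μ hμ j
      simp only [hν, Finsupp.coe_equivFunOnFinite_symm]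
      omega
    rw [Finset.prod_congr rfl this, ← map_prod]
    congr 1
    rw [MvPolynomial.monomial_eq, map_one, one_mul]
    exact (Finsupp.prod_fintype _ _ (fun j => pow_zero _)).symm
  have hsum2 : (∑ μ ∈ s, g μ • MvPolynomial.monomial (ν μ) (1:k)) = 0 := by
    apply IsFractionRing.injective R K
    rw [map_zero, map_sum]
    have : ∀ μ ∈ s, algebraMap R K (g μ • MvPolynomial.monomial (ν μ) (1:k))
        = (g μ • tpow k n μ) * tN := by
      intro μ hμ
      rw [aSmul, ← key μ hμ, smul_mul_assoc]
    rw [Finset.sum_congr rfl this, ← Finset.sum_mul, hsum, zero_mul]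
  have := congrArg (MvPolynomial.coeff (ν μ₀)) hsum2
  rw [MvPolynomial.coeff_zero, MvPolynomial.coeff_sum, Finset.sum_eq_single μ₀] at this
  · simpa [MvPolynomial.coeff_monomial] using this
  · intro μ hμ hne
    rw [MvPolynomial.smul_monomial, MvPolynomial.coeff_monomial, if_neg]
    intro h
    exact hne (hνinj μ hμ μ₀ hμ₀ h)
  · intro h; exact absurd hμ₀ h

noncomputable def Theta : AddMonoidAlgebra D (Lex (Fin n →₀ ℤ)) →ₗ[k]
    D ⊗[k] FractionRing (MvPolynomial (Fin n) k) :=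
  (LinearMap.lTensor D (Finsupp.linearCombination k (tpow k n))) ∘ₗ
    ((AddMonoidAlgebra.coeffLinearEquiv k).trans
      (TensorProduct.finsuppScalarRight k k D (Lex (Fin n →₀ ℤ))).symm).toLinearMap

lemma Theta_single (μ : Lex (Fin n →₀ ℤ)) (d : D) :
    Theta k D n (AddMonoidAlgebra.single μ d) = d ⊗ₜ[k] tpow k n μ := by
  have h1 : (TensorProduct.finsuppScalarRight k k D (Lex (Fin n →₀ ℤ))).symm
      (Finsupp.single μ d) = d ⊗ₜ[k] Finsupp.single μ (1:k) := by
    apply (TensorProduct.finsuppScalarRight k k D (Lex (Fin n →₀ ℤ))).injective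
    rw [LinearEquiv.apply_symm_apply, TensorProduct.finsuppScalarRight_apply_tmul]
    rw [Finsupp.sum_single_index] <;> simp
  rw [Theta, LinearMap.comp_apply, LinearEquiv.coe_toLinearMap, LinearEquiv.trans_apply,
    AddMonoidAlgebra.coeffLinearEquiv_apply, AddMonoidAlgebra.coeff_single]
  erw [h1]
  rw [LinearMap.lTensor_tmul]
  rw [Finsupp.linearCombination_single, one_smul]

lemma Theta_injective : Function.Injective (Theta k D n) := by
  rw [Theta]
  apply Function.Injective.comp (g := LinearMap.lTensor D _)
  · exact Module.Flat.lTensor_preserves_injective_linearMap _ (tpow_linearIndependent k n)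
  · exact ((AddMonoidAlgebra.coeffLinearEquiv k).trans
      (TensorProduct.finsuppScalarRight k k D (Lex (Fin n →₀ ℤ))).symm).injective

lemma Theta_mul (f g : AddMonoidAlgebra D (Lex (Fin n →₀ ℤ))) :
    Theta k D n (f * g) = Theta k D n f * Theta k D n g := by
  induction f using AddMonoidAlgebra.induction_linear with
  | zero => rw [zero_mul, map_zero, zero_mul]
  | add f f' hf hf' => rw [add_mul, map_add, map_add, add_mul, hf, hf']
  | single u d =>
    induction g using AddMonoidAlgebra.induction_linear with
    | zero => rw [mul_zero, map_zero, mul_zero]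
    | add g g' hg hg' => rw [mul_add, map_add, map_add, mul_add, hg, hg']
    | single v e =>
      rw [AddMonoidAlgebra.single_mul_single]
      rw [Theta_single, Theta_single, Theta_single,
        Algebra.TensorProduct.tmul_mul_tmul, tpow_add]

/-- Embedding of `ℕ`-monomials into the exponent group. -/
noncomputable def emb (u : Fin n →₀ ℕ) : Lex (Fin n →₀ ℤ) :=
  toLex (u.mapRange (fun a : ℕ => (a : ℤ)) rfl)

lemma tpow_emb (u : Fin n →₀ ℕ) :
    tpow k n (emb n u) = algebraMap R K (MvPolynomial.monomial u 1) := by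
  rw [tpow]
  have : ∀ j ∈ Finset.univ,
      (algebraMap R K (MvPolynomial.X j)) ^ ((ofLex (emb n u)) j)
      = algebraMap R K (MvPolynomial.X j ^ (u j)) := by
    intro j _
    rw [map_pow]
    have : (ofLex (emb n u)) j = (u j : ℤ) := rfl
    rw [this, zpow_natCast]
  rw [Finset.prod_congr rfl this, ← map_prod]
  congr 1
  rw [MvPolynomial.monomial_eq, map_one, one_mul]
  exact (Finsupp.prod_fintype _ _ (fun j => pow_zero _)).symm

lemma tensor_poly (d : D) (p : MvPolynomial (Fin n) k) :
    ∃ f : AddMonoidAlgebra D (Lex (Fin n →₀ ℤ)),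
      Theta k D n f = d ⊗ₜ[k] algebraMap R K p := by
  induction p using MvPolynomial.induction_on' with
  | monomial u c =>
    refine ⟨AddMonoidAlgebra.single (emb n u) (c • d), ?_⟩
    rw [Theta_single]
    have h : MvPolynomial.monomial u c = c • MvPolynomial.monomial u (1:k) := by
      rw [MvPolynomial.smul_monomial, smul_eq_mul, mul_one]
    rw [h, aSmul, ← tpow_emb, TensorProduct.smul_tmul, TensorProduct.tmul_smul]
  | add p q hp hq =>
    obtain ⟨f, hf⟩ := hp
    obtain ⟨g, hg⟩ := hq
    refine ⟨f + g, ?_⟩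
    rw [map_add, hf, hg, (algebraMap (MvPolynomial (Fin n) k) (FractionRing (MvPolynomial (Fin n) k))).map_add p q,
      TensorProduct.tmul_add]

lemma central (z : D ⊗[k] FractionRing (MvPolynomial (Fin n) k)) (c : K) :
    z * ((1:D) ⊗ₜ[k] c) = ((1:D) ⊗ₜ[k] c) * z := by
  induction z with
  | zero => rw [zero_mul, mul_zero]
  | tmul d c' =>
    rw [Algebra.TensorProduct.tmul_mul_tmul, Algebra.TensorProduct.tmul_mul_tmul,
      mul_one, one_mul, mul_comm]
  | add z₁ z₂ h₁ h₂ => rw [add_mul, mul_add, h₁, h₂]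

lemma theta_denominator (z : D ⊗[k] FractionRing (MvPolynomial (Fin n) k)) :
    ∃ q : MvPolynomial (Fin n) k, q ≠ 0 ∧ ∃ f : AddMonoidAlgebra D (Lex (Fin n →₀ ℤ)),
      Theta k D n f = z * ((1:D) ⊗ₜ[k] algebraMap R K q) := by
  induction z with
  | zero =>
    exact ⟨1, one_ne_zero, 0, by rw [map_zero, zero_mul]⟩
  | tmul d c =>
    obtain ⟨⟨p, q⟩, hq⟩ := IsLocalization.surj (nonZeroDivisors (MvPolynomial (Fin n) k)) c
    obtain ⟨f, hf⟩ := tensor_poly k D n d p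
    refine ⟨(q : MvPolynomial (Fin n) k), nonZeroDivisors.coe_ne_zero q, f, ?_⟩
    rw [Algebra.TensorProduct.tmul_mul_tmul, mul_one, hq, hf]
  | add z₁ z₂ h₁ h₂ =>
    obtain ⟨q₁, hq₁, f₁, hf₁⟩ := h₁
    obtain ⟨q₂, hq₂, f₂, hf₂⟩ := h₂
    obtain ⟨g₁, hg₁⟩ := tensor_poly k D n 1 q₂
    obtain ⟨g₂, hg₂⟩ := tensor_poly k D n 1 q₁
    refine ⟨q₁ * q₂, mul_ne_zero hq₁ hq₂, f₁ * g₁ + f₂ * g₂, ?_⟩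
    rw [map_add, Theta_mul, Theta_mul, hf₁, hf₂, hg₁, hg₂, map_mul, add_mul]
    congr 1
    · rw [mul_assoc, Algebra.TensorProduct.tmul_mul_tmul, one_mul]
    · rw [mul_assoc, Algebra.TensorProduct.tmul_mul_tmul, one_mul, mul_comm
        (algebraMap R K q₁) (algebraMap R K q₂)]

set_option maxHeartbeats 2000000 in
set_option synthInstance.maxHeartbeats 400000 in
theorem main_aux
    (τ : D → D)
    (hτadd : ∀ x y : D, τ (x + y) = τ x + τ y)
    (hτinvol : ∀ x : D, τ (τ x) = x)
    (m : ℕ) (α : Fin m → kˣ) (a : Fin m → Fin n → ℤ)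
    (ha : Function.Injective fun i : Fin m => fun j : Fin n => ((a i j : ZMod 2)))
    (σ : D ⊗[k] FractionRing (MvPolynomial (Fin n) k) →
      D ⊗[k] FractionRing (MvPolynomial (Fin n) k))
    (hσadd : ∀ x y, σ (x + y) = σ x + σ y)
    (hσ : ∀ (d : D) (c : FractionRing (MvPolynomial (Fin n) k)), σ (d ⊗ₜ[k] c) = τ d ⊗ₜ[k] c)
    (x : Fin m → D ⊗[k] FractionRing (MvPolynomial (Fin n) k))
    (hx : ∑ i : Fin m,
        ((1 : D) ⊗ₜ[k]
          (algebraMap k (FractionRing (MvPolynomial (Fin n) k)) (α i) *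
            ∏ j : Fin n,
              algebraMap (MvPolynomial (Fin n) k) (FractionRing (MvPolynomial (Fin n) k))
                (MvPolynomial.X j) ^ (a i j))) *
        σ (x i) * x i = 0) :
    ∀ i, x i = 0 := by
  classical
  by_contra hcon
  push_neg at hcon
  obtain ⟨i₀, hi₀⟩ := hcon
  -- basic facts about τ and σ
  have hτ0 : τ 0 = 0 := by
    have h : τ 0 + τ 0 = τ 0 + 0 := by rw [add_zero, ← hτadd, add_zero]
    exact add_left_cancel h
  have hτinj : ∀ d : D, τ d = 0 → d = 0 := fun d h => by rw [← hτinvol d, h, hτ0]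
  let σ' : (D ⊗[k] K) →+ (D ⊗[k] K) := AddMonoidHom.mk' σ hσadd
  have hσ'app : ∀ z, σ' z = σ z := fun _ => rfl
  set τh : AddMonoidAlgebra D (Lex (Fin n →₀ ℤ)) → AddMonoidAlgebra D (Lex (Fin n →₀ ℤ)) :=
    fun g => AddMonoidAlgebra.ofCoeff (Finsupp.mapRange τ hτ0 g.coeff) with hτhdef
  have hτhapp : ∀ g, τh g = AddMonoidAlgebra.ofCoeff (Finsupp.mapRange τ hτ0 g.coeff) := fun g => rfl
  have hσTheta : ∀ f : AddMonoidAlgebra D (Lex (Fin n →₀ ℤ)),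
      σ (Theta k D n f) = Theta k D n (τh f) := by
    intro f
    rw [hτhapp]
    induction f using AddMonoidAlgebra.induction_linear with
    | zero => rw [AddMonoidAlgebra.coeff_zero, Finsupp.mapRange_zero, AddMonoidAlgebra.ofCoeff_zero, map_zero, ← hσ'app, map_zero]
    | add f g hf hg =>
      rw [AddMonoidAlgebra.coeff_add, Finsupp.mapRange_add hτadd, AddMonoidAlgebra.ofCoeff_add, map_add, map_add, ← hσ'app, map_add, hσ'app, hσ'app, hf, hg]
    | single u d =>
      rw [AddMonoidAlgebra.coeff_single, Finsupp.mapRange_single]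
      show σ (Theta k D n (AddMonoidAlgebra.single u d))
        = Theta k D n (AddMonoidAlgebra.single u (τ d))
      rw [Theta_single, Theta_single, hσ]
  have hσcentral : ∀ (z : D ⊗[k] K) (c : K), σ (z * ((1:D) ⊗ₜ[k] c)) = σ z * ((1:D) ⊗ₜ[k] c) := by
    intro z c
    induction z with
    | zero => rw [zero_mul, ← hσ'app, map_zero, zero_mul]
    | tmul d c' =>
      rw [Algebra.TensorProduct.tmul_mul_tmul, mul_one, hσ, hσ,
        Algebra.TensorProduct.tmul_mul_tmul, mul_one]
    | add z₁ z₂ h₁ h₂ => rw [add_mul, hσadd, hσadd, h₁, h₂, add_mul]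
  -- common denominator
  have hden : ∀ i, ∃ q : MvPolynomial (Fin n) k, q ≠ 0 ∧
      ∃ f : AddMonoidAlgebra D (Lex (Fin n →₀ ℤ)),
        Theta k D n f = x i * ((1:D) ⊗ₜ[k] algebraMap R K q) :=
    fun i => theta_denominator k D n (x i)
  choose q hq f0 hf0 using hden
  set Q : MvPolynomial (Fin n) k := ∏ i, q i with hQdef
  have hQ0 : Q ≠ 0 := Finset.prod_ne_zero_iff.mpr fun i _ => hq i
  have hxQ : ∀ i, ∃ g : AddMonoidAlgebra D (Lex (Fin n →₀ ℤ)),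
      Theta k D n g = x i * ((1:D) ⊗ₜ[k] algebraMap R K Q) := by
    intro i
    obtain ⟨g', hg'⟩ := tensor_poly k D n 1 (∏ j ∈ Finset.univ.erase i, q j)
    refine ⟨f0 i * g', ?_⟩
    rw [Theta_mul, hf0, hg', mul_assoc, Algebra.TensorProduct.tmul_mul_tmul, one_mul,
      ← map_mul, Finset.mul_prod_erase _ _ (Finset.mem_univ i)]
  choose F hF using hxQ
  have haQ0 : algebraMap R K Q ≠ 0 := by
    simp only [ne_eq, map_eq_zero_iff _ (IsFractionRing.injective R K)]
    exact hQ0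
  have hunit : ∀ z : D ⊗[k] K, z * ((1:D) ⊗ₜ[k] algebraMap R K Q) = 0 → z = 0 := by
    intro z h
    have h2 := congrArg (· * ((1:D) ⊗ₜ[k] (algebraMap R K Q)⁻¹)) h
    simp only [zero_mul] at h2
    rwa [mul_assoc, Algebra.TensorProduct.tmul_mul_tmul, one_mul,
      mul_inv_cancel₀ haQ0, ← Algebra.TensorProduct.one_def, mul_one] at h2
  have hFi₀ : F i₀ ≠ 0 := fun h0 => hi₀ (hunit _ (by rw [← hF i₀, h0, map_zero]))
  -- identification of the scalar coefficients
  set aL : Fin m → Lex (Fin n →₀ ℤ) :=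
    fun i => toLex (Finsupp.equivFunOnFinite.symm (a i)) with haL
  set αD : Fin m → D := fun i => algebraMap k D (α i) with hαD
  have hαD0 : ∀ i, αD i ≠ 0 := fun i =>
    (Units.map (algebraMap k D).toMonoidHom (α i)).ne_zero
  have hs : ∀ i, ((1 : D) ⊗ₜ[k]
      (algebraMap k K (α i) * ∏ j, algebraMap R K (MvPolynomial.X j) ^ (a i j)))
      = Theta k D n (AddMonoidAlgebra.single (aL i) (αD i)) := by
    intro i
    rw [Theta_single]
    have h1 : (∏ j, algebraMap R K (MvPolynomial.X j) ^ (a i j)) = tpow k n (aL i) := by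
      rw [tpow]
      exact Finset.prod_congr rfl fun j _ => rfl
    rw [h1, ← Algebra.smul_def, TensorProduct.tmul_smul, TensorProduct.smul_tmul',
      ← Algebra.algebraMap_eq_smul_one]
  -- the global element of the monoid algebra
  set GG : Fin m → AddMonoidAlgebra D (Lex (Fin n →₀ ℤ)) :=
    fun i => AddMonoidAlgebra.single (aL i) (αD i) * (τh (F i) * F i)
    with hGG
  set oQ : D ⊗[k] K := (1:D) ⊗ₜ[k] algebraMap R K Q with hoQ
  have hterm : ∀ i, Theta k D n (GG i) =
      (((1 : D) ⊗ₜ[k]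
        (algebraMap k K (α i) * ∏ j, algebraMap R K (MvPolynomial.X j) ^ (a i j))) *
        σ (x i) * x i) * (oQ * oQ) := by
    intro i
    rw [hGG]
    rw [Theta_mul, Theta_mul, ← hσTheta, hF i, hσcentral, ← hs i]
    have hc : (σ (x i) * oQ) * (x i * oQ) = σ (x i) * x i * (oQ * oQ) := by
      rw [mul_assoc (σ (x i)) oQ (x i * oQ), ← mul_assoc oQ (x i) oQ, ← central,
        mul_assoc (x i) oQ oQ, ← mul_assoc]
    rw [hc]
    simp only [mul_assoc]
  have hTG : Theta k D n (∑ i, GG i) = 0 := by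
    rw [map_sum, Finset.sum_congr rfl fun i _ => hterm i, ← Finset.sum_mul, hx, zero_mul]
  have hG0 : (∑ i, GG i) = 0 := by
    apply Theta_injective k D n
    rw [hTG, map_zero]
  -- leading exponent analysis
  set S : Finset (Fin m) := Finset.univ.filter (fun i => F i ≠ 0) with hS
  have hi₀S : i₀ ∈ S := Finset.mem_filter.mpr ⟨Finset.mem_univ _, hFi₀⟩
  set w : Fin m → Lex (Fin n →₀ ℤ) := fun i =>
    if h : F i = 0 then 0 else (F i).coeff.support.max'
      (Finsupp.support_nonempty_iff.mpr (mt AddMonoidAlgebra.coeff_eq_zero.mp h)) with hw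
  set cc : Fin m → Lex (Fin n →₀ ℤ) := fun i => aL i + (w i + w i) with hcc
  obtain ⟨i₁, hi₁S, hmax⟩ := S.exists_max_image cc ⟨i₀, hi₀S⟩
  have hFi₁ : F i₁ ≠ 0 := (Finset.mem_filter.mp hi₁S).2
  have hsuppF : ∀ i, ∀ u ∈ (F i).coeff.support, u ≤ w i := by
    intro i u hu
    have hne : F i ≠ 0 := by
      intro h
      rw [h] at hu
      simp at hu
    rw [hw]
    simp only [dif_neg hne]
    exact Finset.le_max' _ u hu
  have hsuppτ : ∀ i, ∀ u ∈ (τh (F i)).coeff.support, u ≤ w i := by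
    intro i u hu
    rw [hτhapp] at hu
    exact hsuppF i u (Finsupp.support_mapRange (hf := hτ0) hu)
  have hsuppS : ∀ i, ∀ u ∈ (AddMonoidAlgebra.single (aL i) (αD i) :
      AddMonoidAlgebra D (Lex (Fin n →₀ ℤ))).coeff.support, u ≤ aL i := by
    intro i u hu
    rw [Finset.mem_singleton.mp (Finsupp.support_single_subset hu)]
  have hsuppGG : ∀ i, ∀ u ∈ (GG i).coeff.support, u ≤ cc i := by
    intro i u hu
    exact supp_mul_le _ _ (hsuppS i)
      (supp_mul_le _ _ (hsuppτ i) (hsuppF i)) u hu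
  have hccinj : ∀ i ∈ S, cc i = cc i₁ → i = i₁ := by
    intro i hiS h
    apply ha
    funext j
    show ((a i j : ZMod 2)) = ((a i₁ j : ZMod 2))
    have hj : (ofLex (cc i)) j = (ofLex (cc i₁)) j := by rw [h]
    have hcomp : ∀ l, (ofLex (cc l)) j = a l j + ((ofLex (w l)) j + (ofLex (w l)) j) :=
      fun l => rfl
    rw [hcomp i, hcomp i₁] at hj
    have h2 : a i j = a i₁ j + 2 * ((ofLex (w i₁)) j - (ofLex (w i)) j) := by omega
    calc ((a i j : ZMod 2))
        = ((a i₁ j + 2 * ((ofLex (w i₁)) j - (ofLex (w i)) j) : ℤ) : ZMod 2) := by rw [← h2]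
      _ = (a i₁ j : ZMod 2) + 2 * (((ofLex (w i₁)) j - (ofLex (w i)) j : ℤ) : ZMod 2) := by
          push_cast; ring
      _ = (a i₁ j : ZMod 2) := by
          rw [show (2 : ZMod 2) = 0 from rfl, zero_mul, add_zero]
  have hvanish : ∀ i, i ≠ i₁ → (GG i).coeff (cc i₁) = 0 := by
    intro i hne
    by_cases hFi : F i = 0
    · have : GG i = 0 := by
        rw [hGG]
        show AddMonoidAlgebra.single (aL i) (αD i) * (τh (F i) * F i) = 0
        rw [hFi, mul_zero, mul_zero]
      rw [this]
      rfl
    · have hiS : i ∈ S := Finset.mem_filter.mpr ⟨Finset.mem_univ _, hFi⟩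
      have hle : cc i ≤ cc i₁ := hmax i hiS
      have hne2 : cc i ≠ cc i₁ := fun h => hne (hccinj i hiS h)
      apply Finsupp.notMem_support_iff.mp
      intro hmem
      exact hne2 (le_antisymm hle (hsuppGG i (cc i₁) hmem))
  have hlead : (GG i₁).coeff (cc i₁) ≠ 0 := by
    have e1 : (GG i₁).coeff (cc i₁) = αD i₁ * (τ ((F i₁).coeff (w i₁)) * ((F i₁).coeff (w i₁))) := by
      show (AddMonoidAlgebra.single (aL i₁) (αD i₁) * (τh (F i₁) * F i₁)).coeff
        (aL i₁ + (w i₁ + w i₁)) = _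
      rw [mul_apply_lead _ _ (hsuppS i₁)
        (supp_mul_le _ _ (hsuppτ i₁) (hsuppF i₁))]
      rw [AddMonoidAlgebra.coeff_single, Finsupp.single_eq_same]
      rw [mul_apply_lead _ _ (hsuppτ i₁) (hsuppF i₁)]
      rw [hτhapp, AddMonoidAlgebra.coeff_ofCoeff, Finsupp.mapRange_apply]
    rw [e1]
    have hFw : (F i₁).coeff (w i₁) ≠ 0 := by
      rw [hw]
      simp only [dif_neg hFi₁]
      exact Finsupp.mem_support_iff.mp (Finset.max'_mem _ _)
    exact mul_ne_zero (hαD0 i₁) (mul_ne_zero (fun h => hFw (hτinj _ h)) hFw)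
  have hfin : (∑ i, GG i).coeff (cc i₁) = (0 : AddMonoidAlgebra D (Lex (Fin n →₀ ℤ))).coeff (cc i₁) := by
    rw [hG0]
  rw [AddMonoidAlgebra.coeff_sum, Finsupp.finset_sum_apply, Finset.sum_eq_single i₁
    (fun i _ hne => hvanish i hne) (fun h => absurd (Finset.mem_univ i₁) h),
    AddMonoidAlgebra.coeff_zero, Finsupp.zero_apply] at hfin
  exact hlead hfin

end Theta

/-- Let `D` be a division ring, `k` a field contained in the center of `D`
(i.e. `D` is a `k`-algebra), and `τ` a `k`-linear ring anti-automorphism of `D` with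
`τ ∘ τ = id`. Let `K = k(t₁, …, tₙ)` be the field of fractions of the polynomial ring
in `n` variables over `k`, and let `σ = τ ⊗ id_K` be the unique additive map on
`D ⊗[k] K` with `σ (d ⊗ c) = τ d ⊗ c`. Fix units `α₁, …, α_m ∈ kˣ` and integer vectors
`a₁, …, a_m ∈ ℤⁿ` whose images in `(ℤ/2ℤ)ⁿ` are pairwise distinct. Then the hermitian
form `h(x, y) = ∑ i, αᵢ t₁^{a i 1} ⋯ tₙ^{a i n} σ(xᵢ) yᵢ` is anisotropic on
`(D ⊗[k] K)^m`: if `∑ i, αᵢ t₁^{a i 1} ⋯ tₙ^{a i n} σ(xᵢ) xᵢ = 0` then every `xᵢ = 0`.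
Here `tⱼ` is the image in `K` of the polynomial variable `Xⱼ`, and the scalar
`αᵢ t₁^{a i 1} ⋯ tₙ^{a i n} ∈ Kˣ` acts through the inclusion `K → D ⊗[k] K`,
`c ↦ 1 ⊗ c`. -/
theorem hermitian_form_anisotropic (k D : Type) [Field k] [DivisionRing D] [Algebra k D]
    (τ : D → D)
    (hτadd : ∀ x y : D, τ (x + y) = τ x + τ y)
    (hτmul : ∀ x y : D, τ (x * y) = τ y * τ x)
    (hτone : τ 1 = 1)
    (hτlin : ∀ (c : k) (x : D), τ (c • x) = c • τ x)
    (hτinvol : ∀ x : D, τ (τ x) = x)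
    (n m : ℕ) (α : Fin m → kˣ) (a : Fin m → Fin n → ℤ)
    (ha : Function.Injective fun i : Fin m => fun j : Fin n => ((a i j : ZMod 2)))
    (σ : D ⊗[k] FractionRing (MvPolynomial (Fin n) k) →
      D ⊗[k] FractionRing (MvPolynomial (Fin n) k))
    (hσadd : ∀ x y, σ (x + y) = σ x + σ y)
    (hσ : ∀ (d : D) (c : FractionRing (MvPolynomial (Fin n) k)), σ (d ⊗ₜ[k] c) = τ d ⊗ₜ[k] c)
    (x : Fin m → D ⊗[k] FractionRing (MvPolynomial (Fin n) k))
    (hx : ∑ i : Fin m,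
        ((1 : D) ⊗ₜ[k]
          (algebraMap k (FractionRing (MvPolynomial (Fin n) k)) (α i) *
            ∏ j : Fin n,
              algebraMap (MvPolynomial (Fin n) k) (FractionRing (MvPolynomial (Fin n) k))
                (MvPolynomial.X j) ^ (a i j))) *
        σ (x i) * x i = 0) :
    ∀ i, x i = 0 :=
  main_aux k D n τ hτadd hτinvol m α a ha σ hσadd hσ x hx
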